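/- The set ℤ×{0} is a θ-discrete subset of the Bing space B. -/

import Mathlib

/-- A point of the Bing space: a rational pair `(x, y)` with `0 ≤ y`. -/
structure BingPt where
  x : ℚ
  y : ℚ
  hy : 0 ≤ y

/-- The pair of base "intervals" attached to the point `(a,b)`:
rational points `(x,0)` with `|x - (a - b/√3)| < ε` or `|x - (a + b/√3)| < ε`. -/
def wedge (a b : ℚ) (ε : ℝ) : Set BingPt :=
  {z : BingPt | z.y = 0 ∧ (|(z.x : ℝ) - ((a : ℝ) - (b : ℝ) / Real.sqrt 3)| < ε ∨
    |(z.x : ℝ) - ((a : ℝ) + (b : ℝ) / Real.sqrt 3)| < ε)}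

/-- A set `U` is Bing-open if each of its points `(a,b)` admits `ε > 0`
with the corresponding base intervals contained in `U`. -/
def BingOpen (U : Set BingPt) : Prop :=
  ∀ z ∈ U, ∃ ε : ℝ, 0 < ε ∧ wedge z.x z.y ε ⊆ U

/-- The Bing topology. -/
instance : TopologicalSpace BingPt where
  IsOpen := BingOpen
  isOpen_univ := fun _ _ => ⟨1, one_pos, fun _ _ => trivial⟩
  isOpen_inter := by
    intro U V hU hV z hz
    obtain ⟨ε1, hε1, h1⟩ := hU z hz.1
    obtain ⟨ε2, hε2, h2⟩ := hV z hz.2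
    refine ⟨min ε1 ε2, lt_min hε1 hε2, fun w hw => ⟨h1 ⟨hw.1, ?_⟩, h2 ⟨hw.1, ?_⟩⟩⟩
    · exact hw.2.imp (fun h => h.trans_le (min_le_left _ _)) (fun h => h.trans_le (min_le_left _ _))
    · exact hw.2.imp (fun h => h.trans_le (min_le_right _ _)) (fun h => h.trans_le (min_le_right _ _))
  isOpen_sUnion := by
    intro S hS z hz
    obtain ⟨U, hU, hzU⟩ := hz
    obtain ⟨ε, hε, h⟩ := hS U hU z hzU
    exact ⟨ε, hε, fun w hw => ⟨U, hU, h hw⟩⟩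

/-- `D` is θ-discrete: every point has a neighborhood whose closure meets `D` in ≤ 1 point. -/
def ThetaDiscrete {X : Type*} [TopologicalSpace X] (D : Set X) : Prop :=
  ∀ x : X, ∃ O ∈ nhds x, (closure O ∩ D).Subsingleton

/-- `D` is θ-closed: every point outside `D` has a neighborhood whose closure misses `D`. -/
def ThetaClosed {X : Type*} [TopologicalSpace X] (D : Set X) : Prop :=
  ∀ x : X, x ∉ D → ∃ O ∈ nhds x, closure O ∩ D = ∅

/-- `D` is discrete (as a subset): every point has a neighborhood meeting `D` in ≤ 1 point. -/
def DiscreteIn {X : Type*} [TopologicalSpace X] (D : Set X) : Prop :=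
  ∀ x : X, ∃ O ∈ nhds x, (O ∩ D).Subsingleton

lemma BingPt.ext' {p q : BingPt} (hx : p.x = q.x) (hy : p.y = q.y) : p = q := by
  cases p; cases q; simp_all

/-- The basic neighborhood `{x} ∪ wedge` is open. -/
lemma isOpen_insert_wedge (x : BingPt) (ε : ℝ) (hε : 0 < ε) :
    IsOpen (insert x (wedge x.x x.y ε)) := by
  show BingOpen _
  intro z hz
  rcases hz with rfl | ⟨hz0, hz1⟩
  · exact ⟨ε, hε, Set.subset_insert _ _⟩
  · rcases hz1 with h | h
    · refine ⟨ε - |(z.x : ℝ) - ((x.x : ℝ) - (x.y : ℝ) / Real.sqrt 3)|, by linarith [abs_nonneg ((z.x : ℝ) - ((x.x : ℝ) - (x.y : ℝ) / Real.sqrt 3))], ?_⟩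
      rintro w ⟨hw0, hw1⟩
      refine Set.mem_insert_iff.mpr (Or.inr ⟨hw0, Or.inl ?_⟩)
      have hzy : ((z.y : ℝ)) = 0 := by exact_mod_cast hz0
      rw [hzy] at hw1
      simp only [zero_div, sub_zero, add_zero] at hw1
      have : |(w.x : ℝ) - z.x| < ε - |(z.x : ℝ) - ((x.x : ℝ) - (x.y : ℝ) / Real.sqrt 3)| := by
        rcases hw1 with h' | h' <;> simpa using h'
      calc |(w.x : ℝ) - ((x.x : ℝ) - (x.y : ℝ) / Real.sqrt 3)|
          ≤ |(w.x : ℝ) - z.x| + |(z.x : ℝ) - ((x.x : ℝ) - (x.y : ℝ) / Real.sqrt 3)| :=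
            abs_sub_le _ _ _
        _ < ε := by linarith
    · refine ⟨ε - |(z.x : ℝ) - ((x.x : ℝ) + (x.y : ℝ) / Real.sqrt 3)|, by linarith [abs_nonneg ((z.x : ℝ) - ((x.x : ℝ) + (x.y : ℝ) / Real.sqrt 3))], ?_⟩
      rintro w ⟨hw0, hw1⟩
      refine Set.mem_insert_iff.mpr (Or.inr ⟨hw0, Or.inr ?_⟩)
      have hzy : ((z.y : ℝ)) = 0 := by exact_mod_cast hz0
      rw [hzy] at hw1
      simp only [zero_div, sub_zero, add_zero] at hw1
      have : |(w.x : ℝ) - z.x| < ε - |(z.x : ℝ) - ((x.x : ℝ) + (x.y : ℝ) / Real.sqrt 3)| := by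
        rcases hw1 with h' | h' <;> simpa using h'
      calc |(w.x : ℝ) - ((x.x : ℝ) + (x.y : ℝ) / Real.sqrt 3)|
          ≤ |(w.x : ℝ) - z.x| + |(z.x : ℝ) - ((x.x : ℝ) + (x.y : ℝ) / Real.sqrt 3)| :=
            abs_sub_le _ _ _
        _ < ε := by linarith

/-- Base points in the closure of a basic neighborhood lie within `ε` of a foot. -/
lemma mem_closure_bound (x : BingPt) (ε : ℝ) (hε : 0 < ε) {p : BingPt} (hp0 : p.y = 0)
    (hp : p ∈ closure (insert x (wedge x.x x.y ε))) :
    |(p.x : ℝ) - ((x.x : ℝ) - (x.y : ℝ) / Real.sqrt 3)| ≤ ε ∨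
    |(p.x : ℝ) - ((x.x : ℝ) + (x.y : ℝ) / Real.sqrt 3)| ≤ ε := by
  set f1 : ℝ := (x.x : ℝ) - (x.y : ℝ) / Real.sqrt 3 with hf1
  set f2 : ℝ := (x.x : ℝ) + (x.y : ℝ) / Real.sqrt 3 with hf2
  by_contra hcon
  push_neg at hcon
  obtain ⟨h1, h2⟩ := hcon
  set δ : ℝ := min (|(p.x : ℝ) - f1| - ε) (|(p.x : ℝ) - f2| - ε) with hδdef
  have hδ : 0 < δ := lt_min (by linarith) (by linarith)
  set U : Set BingPt := {z : BingPt | z.y = 0 ∧ |(z.x : ℝ) - (p.x : ℝ)| < δ} with hU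
  have hUopen : IsOpen U := by
    show BingOpen U
    rintro z ⟨hz0, hz1⟩
    refine ⟨δ - |(z.x : ℝ) - (p.x : ℝ)|, by linarith, ?_⟩
    rintro w ⟨hw0, hw1⟩
    have hzy : ((z.y : ℝ)) = 0 := by exact_mod_cast hz0
    rw [hzy] at hw1
    simp only [zero_div, sub_zero, add_zero] at hw1
    have hwz : |(w.x : ℝ) - z.x| < δ - |(z.x : ℝ) - (p.x : ℝ)| := by
      rcases hw1 with h' | h' <;> simpa using h'
    refine ⟨hw0, ?_⟩
    calc |(w.x : ℝ) - (p.x : ℝ)| ≤ |(w.x : ℝ) - z.x| + |(z.x : ℝ) - (p.x : ℝ)| := abs_sub_le _ _ _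
      _ < δ := by linarith
  have hpU : p ∈ U := ⟨hp0, by simpa using hδ⟩
  obtain ⟨z, hzU, hzO⟩ := mem_closure_iff.mp hp U hUopen hpU
  obtain ⟨hz0, hz1⟩ := hzU
  have hzw : z ∈ wedge x.x x.y ε := by
    rcases hzO with rfl | hzO
    · -- z = x with z.y = 0
      refine ⟨hz0, Or.inl ?_⟩
      have hzy : ((z.y : ℝ)) = 0 := by exact_mod_cast hz0
      rw [hzy]
      simpa using hε
    · exact hzO
  obtain ⟨-, hz2⟩ := hzw
  rcases hz2 with h | h
  · have hle : δ ≤ |(p.x : ℝ) - f1| - ε := min_le_left _ _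
    have := abs_sub_le (p.x : ℝ) (z.x : ℝ) f1
    rw [abs_sub_comm (p.x : ℝ) (z.x : ℝ)] at this
    linarith
  · have hle : δ ≤ |(p.x : ℝ) - f2| - ε := min_le_right _ _
    have := abs_sub_le (p.x : ℝ) (z.x : ℝ) f2
    rw [abs_sub_comm (p.x : ℝ) (z.x : ℝ)] at this
    linarith

/-- The set `ℤ × {0}` is θ-discrete in the Bing space. -/
theorem intSet_thetaDiscrete :
    ThetaDiscrete {z : BingPt | z.y = 0 ∧ ∃ n : ℤ, z.x = (n : ℚ)} := by
  intro x
  by_cases hb : x.y = 0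
  · -- x on the base line: radius 1/3 works
    refine ⟨insert x (wedge x.x x.y (1/3)), (isOpen_insert_wedge x _ (by norm_num)).mem_nhds
      (Set.mem_insert _ _), ?_⟩
    rintro p ⟨hp, hp0, m, hm⟩ q ⟨hq, hq0, n, hn⟩
    have hby : ((x.y : ℝ)) = 0 := by exact_mod_cast hb
    have h1 := mem_closure_bound x _ (by norm_num) hp0 hp
    have h2 := mem_closure_bound x _ (by norm_num) hq0 hq
    rw [hby] at h1 h2
    simp only [zero_div, sub_zero, add_zero, or_self] at h1 h2
    have hm' : ((p.x : ℝ)) = (m : ℝ) := by exact_mod_cast hm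
    have hn' : ((q.x : ℝ)) = (n : ℝ) := by exact_mod_cast hn
    rw [hm'] at h1; rw [hn'] at h2
    have hmn : |(m : ℝ) - (n : ℝ)| < 1 := by
      calc |(m : ℝ) - (n : ℝ)| ≤ |(m : ℝ) - (x.x : ℝ)| + |(x.x : ℝ) - (n : ℝ)| := abs_sub_le _ _ _
        _ < 1 := by rw [abs_sub_comm] at h2; linarith
    have : m = n := by
      have h3 : |m - n| < 1 := by exact_mod_cast (by push_cast; exact hmn : |((m - n : ℤ) : ℝ)| < 1)
      rw [abs_lt] at h3
      omega
    exact BingPt.ext' (by rw [hm, hn, this]) (hp0.trans hq0.symm)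
  · -- x off the base line: the feet are irrational
    set f1 : ℝ := (x.x : ℝ) - (x.y : ℝ) / Real.sqrt 3 with hf1
    set f2 : ℝ := (x.x : ℝ) + (x.y : ℝ) / Real.sqrt 3 with hf2
    have hs3 : Irrational (Real.sqrt 3) := by
      simpa using (Nat.prime_three).irrational_sqrt
    have hdiv : Irrational ((x.y : ℝ) / Real.sqrt 3) := hs3.ratCast_div hb
    have hirr1 : Irrational f1 := Irrational.ratCast_sub x.x hdiv
    have hirr2 : Irrational f2 := Irrational.ratCast_add x.x hdiv
    have hd1 : 0 < |f1 - (round f1 : ℤ)| :=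
      abs_pos.mpr (sub_ne_zero.mpr (hirr1.ne_int _))
    have hd2 : 0 < |f2 - (round f2 : ℤ)| :=
      abs_pos.mpr (sub_ne_zero.mpr (hirr2.ne_int _))
    set ε : ℝ := min (|f1 - (round f1 : ℤ)|) (|f2 - (round f2 : ℤ)|) / 2 with hεdef
    have hε : 0 < ε := by positivity
    refine ⟨insert x (wedge x.x x.y ε), (isOpen_insert_wedge x ε hε).mem_nhds
      (Set.mem_insert _ _), ?_⟩
    rintro p ⟨hp, hp0, m, hm⟩ q hq
    exfalso
    have h1 := mem_closure_bound x ε hε hp0 hp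
    have hm' : ((p.x : ℝ)) = (m : ℝ) := by exact_mod_cast hm
    rw [hm'] at h1
    rcases h1 with h | h
    · have := round_le f1 m
      have hεle : ε ≤ |f1 - (round f1 : ℤ)| / 2 := by
        rw [hεdef]; gcongr; exact min_le_left _ _
      rw [abs_sub_comm ((m : ℝ))] at h
      linarith
    · have := round_le f2 m
      have hεle : ε ≤ |f2 - (round f2 : ℤ)| / 2 := by
        rw [hεdef]; gcongr; exact min_le_right _ _
      rw [abs_sub_comm ((m : ℝ))] at h
      linarith
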